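/- With the notation of the relative Zariski decomposition: let M be k×k symmetric negative definite with M_{ij} ≥ 0 for i ≠ j, let b, b' ∈ ℝ^k with b' ≤ b componentwise, and let a, a' ≥ 0 be the corresponding solutions of the complementarity problem ((b - Ma)_i ≥ 0, = 0 when a_i > 0; similarly for b', a'). Then a ≤ a' componentwise. -/

import Mathlib

/-- (Monotonicity of the negative part, Lemma 5.1 in linear-algebraic
form.) With `M` symmetric negative definite with nonnegative off-diagonal entries,
if `b' ≤ b` componentwise and `a, a' ≥ 0` solve the respective complementarity
problems, then `a ≤ a'` componentwise. -/
theorem complementarity_monotone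
    (k : ℕ) (M : Matrix (Fin k) (Fin k) ℝ)
    (hsym : M.IsSymm) (hneg : (-M).PosDef)
    (hoff : ∀ i j, i ≠ j → 0 ≤ M i j)
    (b b' : Fin k → ℝ) (hbb : ∀ i, b' i ≤ b i)
    (a a' : Fin k → ℝ)
    (ha0 : ∀ i, 0 ≤ a i) (ha'0 : ∀ i, 0 ≤ a' i)
    (ha1 : ∀ i, 0 ≤ (b - M.mulVec a) i)
    (ha2 : ∀ i, 0 < a i → (b - M.mulVec a) i = 0)
    (ha'1 : ∀ i, 0 ≤ (b' - M.mulVec a') i)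
    (ha'2 : ∀ i, 0 < a' i → (b' - M.mulVec a') i = 0) :
    ∀ i, a i ≤ a' i := by
  by_contra hcon
  push_neg at hcon
  obtain ⟨i0, hi0⟩ := hcon
  set v : Fin k → ℝ := fun i => max (a i - a' i) 0 with hv
  have hvnn : ∀ i, 0 ≤ v i := fun i => le_max_right _ _
  have hvne : v ≠ 0 := by
    intro h
    have h0 := congrFun h i0
    have : v i0 = a i0 - a' i0 := max_eq_left (by linarith)
    rw [this] at h0
    simp at h0
    linarith
  have key : ∀ i, 0 ≤ v i * M.mulVec v i := by
    intro i
    rcases eq_or_lt_of_le (hvnn i) with h | h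
    · simp [← h]
    · have hai : a' i < a i := by
        by_contra hle
        push_neg at hle
        have : v i = 0 := max_eq_right (by linarith)
        linarith
      have hapos : 0 < a i := lt_of_le_of_lt (ha'0 i) hai
      have hMa : M.mulVec a i = b i := by
        have h2 := ha2 i hapos
        simp only [Pi.sub_apply] at h2
        linarith
      have hMa' : M.mulVec a' i ≤ b' i := by
        have h1 := ha'1 i
        simp only [Pi.sub_apply] at h1
        linarith
      have hsum : M.mulVec v i
          = (M.mulVec a i - M.mulVec a' i) - ∑ j, M i j * min (a j - a' j) 0 := by
        simp only [Matrix.mulVec, dotProduct]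
        rw [← Finset.sum_sub_distrib, ← Finset.sum_sub_distrib]
        apply Finset.sum_congr rfl
        intro j _
        have hvj : v j = (a j - a' j) - min (a j - a' j) 0 := by
          rcases le_total (a j - a' j) 0 with hj | hj
          · rw [hv]
            simp only [max_eq_right hj, min_eq_left hj]
            ring
          · rw [hv]
            simp only [max_eq_left hj, min_eq_right hj]
            ring
        rw [hvj]; ring
      have hterm : ∑ j, M i j * min (a j - a' j) 0 ≤ 0 := by
        apply Finset.sum_nonpos
        intro j _
        by_cases hji : j = i
        · subst hji
          have : min (a j - a' j) 0 = 0 := min_eq_right (by linarith)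
          simp [this]
        · exact mul_nonpos_of_nonneg_of_nonpos
            (hoff i j (fun h => hji h.symm)) (min_le_right _ _)
      have hMv : 0 ≤ M.mulVec v i := by
        have hb := hbb i
        rw [hsum, hMa]
        linarith
      exact mul_nonneg (le_of_lt h) hMv
  have hsumpos : 0 ≤ dotProduct v (M.mulVec v) :=
    Finset.sum_nonneg fun i _ => key i
  have hpd := hneg.dotProduct_mulVec_pos hvne
  rw [Matrix.neg_mulVec] at hpd
  simp only [dotProduct_neg, star_trivial] at hpd
  linarith [hpd, hsumpos]
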